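/- If f, g : Δ = [a,b]×[c,d] → [0,∞) are convex on the co-ordinates on Δ (a < b, c < d) with f·g integrable, then 4 f((a+b)/2,(c+d)/2) g((a+b)/2,(c+d)/2) ≤ (1/((b-a)(d-c))) ∫_a^b ∫_c^d f(x,y)g(x,y) dy dx + (5/36)L + (7/36)M + (2/9)N, where L, M, N are as follows: L = f(a,c)g(a,c)+f(b,c)g(b,c)+f(a,d)g(a,d)+f(b,d)g(b,d), M = f(a,c)g(a,d)+f(a,d)g(a,c)+f(b,c)g(b,d)+f(b,d)g(b,c)+f(b,c)g(a,c)+f(b,d)g(a,d)+f(a,c)g(b,c)+f(a,d)g(b,d), N = f(b,c)g(a,d)+f(b,d)g(a,c)+f(a,c)g(b,d)+f(a,d)g(b,c). -/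

import Mathlib

open MeasureTheory Set

lemma aux_pt {a b x : ℝ} {f : ℝ → ℝ} (hab : a < b) (hf : ConvexOn ℝ (Set.Icc a b) f)
    (hx : x ∈ Set.Icc a b) : (b - a) * f x ≤ (b - x) * f a + (x - a) * f b := by
  have hba : (0:ℝ) < b - a := by linarith
  set t : ℝ := (b - x) / (b - a) with ht
  have ht0 : 0 ≤ t := div_nonneg (by linarith [hx.2]) hba.le
  have ht1 : 0 ≤ 1 - t := by
    have : t ≤ 1 := by rw [ht, div_le_one hba]; linarith [hx.1]
    linarith
  have hsum : t + (1 - t) = 1 := by ring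
  have hcx := hf.2 (left_mem_Icc.mpr hab.le) (right_mem_Icc.mpr hab.le) ht0 ht1 hsum
  simp only [smul_eq_mul] at hcx
  have hxx : t * a + (1 - t) * b = x := by rw [ht]; field_simp [hba.ne'] <;> ring
  rw [hxx] at hcx
  have e : (b - a) * (t * f a + (1 - t) * f b) = (b - x) * f a + (x - a) * f b := by
    rw [ht]; field_simp [hba.ne'] <;> ring
  calc (b - a) * f x ≤ (b - a) * (t * f a + (1 - t) * f b) :=
        mul_le_mul_of_nonneg_left hcx hba.le
    _ = (b - x) * f a + (x - a) * f b := e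

lemma aux_intble {a b : ℝ} {f g : ℝ → ℝ} (hab : a < b)
    (hf : ConvexOn ℝ (Set.Icc a b) f) (hg : ConvexOn ℝ (Set.Icc a b) g)
    (hf0 : ∀ x ∈ Set.Icc a b, 0 ≤ f x) (hg0 : ∀ x ∈ Set.Icc a b, 0 ≤ g x) :
    IntervalIntegrable (fun x => f x * g x) volume a b := by
  rw [intervalIntegrable_iff_integrableOn_Ioo_of_le hab.le]
  have hfc : ContinuousOn f (Set.Ioo a b) :=
    (hf.subset Set.Ioo_subset_Icc_self (convex_Ioo a b)).continuousOn isOpen_Ioo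
  have hgc : ContinuousOn g (Set.Ioo a b) :=
    (hg.subset Set.Ioo_subset_Icc_self (convex_Ioo a b)).continuousOn isOpen_Ioo
  refine ⟨((hfc.mul hgc).aestronglyMeasurable measurableSet_Ioo), ?_⟩
  apply MeasureTheory.HasFiniteIntegral.restrict_of_bounded
    (C := max (f a) (f b) * max (g a) (g b)) measure_Ioo_lt_top
  filter_upwards [ae_restrict_mem measurableSet_Ioo] with x hx
  have hx' : x ∈ Set.Icc a b := Set.Ioo_subset_Icc_self hx
  have h1 := aux_pt hab hf hx'
  have h2 := aux_pt hab hg hx'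
  have hf0x := hf0 x hx'
  have hg0x := hg0 x hx'
  have hfM : f x ≤ max (f a) (f b) := by
    nlinarith [mul_nonneg (sub_nonneg.2 hx'.2) (sub_nonneg.2 (le_max_left (f a) (f b))),
      mul_nonneg (sub_nonneg.2 hx'.1) (sub_nonneg.2 (le_max_right (f a) (f b))), h1]
  have hgM : g x ≤ max (g a) (g b) := by
    nlinarith [mul_nonneg (sub_nonneg.2 hx'.2) (sub_nonneg.2 (le_max_left (g a) (g b))),
      mul_nonneg (sub_nonneg.2 hx'.1) (sub_nonneg.2 (le_max_right (g a) (g b))), h2]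
  rw [Real.norm_eq_abs, abs_of_nonneg (mul_nonneg hf0x hg0x)]
  exact mul_le_mul hfM hgM hg0x (le_trans hf0x hfM)

lemma aux_i1 (a b : ℝ) : (∫ x in a..b, (b - x)^2) = (b-a)^3/3 := by
  rw [intervalIntegral.integral_comp_sub_left (fun x => x^2) b]
  simp [integral_pow]; ring

lemma aux_i2 (a b : ℝ) : (∫ x in a..b, (x - a)^2) = (b-a)^3/3 := by
  rw [intervalIntegral.integral_comp_sub_right (fun x => x^2) a]
  simp [integral_pow]; ring

lemma aux_i3 (a b : ℝ) : (∫ x in a..b, (b - x)*(x - a)) = (b-a)^3/6 := by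
  have e : ∀ x : ℝ, (b - x)*(x - a) = ((b-a)^2 - (b-x)^2 - (x-a)^2)/2 := by
    intro x; ring
  simp only [e]
  rw [intervalIntegral.integral_div]
  rw [intervalIntegral.integral_sub (Continuous.intervalIntegrable (by fun_prop) _ _) (Continuous.intervalIntegrable (by fun_prop) _ _)]
  rw [intervalIntegral.integral_sub (Continuous.intervalIntegrable (by fun_prop) _ _) (Continuous.intervalIntegrable (by fun_prop) _ _)]
  rw [aux_i1, aux_i2, intervalIntegral.integral_const]
  simp [smul_eq_mul]; ring
lemma aux_p1 {a b : ℝ} {f g : ℝ → ℝ} (hab : a < b)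
    (hf : ConvexOn ℝ (Set.Icc a b) f) (hg : ConvexOn ℝ (Set.Icc a b) g)
    (hf0 : ∀ x ∈ Set.Icc a b, 0 ≤ f x) (hg0 : ∀ x ∈ Set.Icc a b, 0 ≤ g x) :
    (∫ x in a..b, f x * g x) ≤
      (b-a) * ((1/3)*(f a * g a + f b * g b) + (1/6)*(f a * g b + f b * g a)) := by
  have hba : (0:ℝ) < b - a := by linarith
  have hfg := aux_intble hab hf hg hf0 hg0
  have key : ∀ x ∈ Set.Icc a b, (b-a)^2 * (f x * g x) ≤
      (f a * g a) * (b-x)^2 + (f a * g b + f b * g a) * ((b-x)*(x-a)) + (f b * g b) * (x-a)^2 := by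
    intro x hx
    have h1 := aux_pt hab hf hx
    have h2 := aux_pt hab hg hx
    have hmul : ((b-a)*f x) * ((b-a)*g x) ≤
        ((b-x)*f a + (x-a)*f b) * ((b-x)*g a + (x-a)*g b) :=
      mul_le_mul h1 h2 (mul_nonneg hba.le (hg0 x hx))
        (le_trans (mul_nonneg hba.le (hf0 x hx)) h1)
    nlinarith [hmul]
  have i1 : IntervalIntegrable (fun x => (f a * g a) * (b-x)^2) volume a b :=
    Continuous.intervalIntegrable (by fun_prop) _ _
  have i2 : IntervalIntegrable (fun x => (f a * g b + f b * g a) * ((b-x)*(x-a))) volume a b :=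
    Continuous.intervalIntegrable (by fun_prop) _ _
  have i3 : IntervalIntegrable (fun x => (f b * g b) * (x-a)^2) volume a b :=
    Continuous.intervalIntegrable (by fun_prop) _ _
  have hmono := intervalIntegral.integral_mono_on hab.le (hfg.const_mul ((b-a)^2))
    ((i1.add i2).add i3) key
  rw [intervalIntegral.integral_const_mul] at hmono
  rw [intervalIntegral.integral_add (i1.add i2) i3, intervalIntegral.integral_add i1 i2] at hmono
  rw [intervalIntegral.integral_const_mul, intervalIntegral.integral_const_mul,
    intervalIntegral.integral_const_mul, aux_i1, aux_i2, aux_i3] at hmono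
  have hfin : (b-a)^2 * (∫ x in a..b, f x * g x) ≤
      (b-a)^2 * ((b-a) * ((1/3)*(f a * g a + f b * g b) + (1/6)*(f a * g b + f b * g a))) := by
    nlinarith [hmono]
  exact le_of_mul_le_mul_left hfin (by positivity)

lemma aux_p2 {a b : ℝ} {f g : ℝ → ℝ} (hab : a < b)
    (hf : ConvexOn ℝ (Set.Icc a b) f) (hg : ConvexOn ℝ (Set.Icc a b) g)
    (hf0 : ∀ x ∈ Set.Icc a b, 0 ≤ f x) (hg0 : ∀ x ∈ Set.Icc a b, 0 ≤ g x) :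
    (b-a) * (2 * f ((a+b)/2) * g ((a+b)/2)) ≤ (∫ x in a..b, f x * g x) +
      (b-a) * ((1/6)*(f a * g a + f b * g b) + (1/3)*(f a * g b + f b * g a)) := by
  have hba : (0:ℝ) < b - a := by linarith
  have hm : (a+b)/2 ∈ Set.Icc a b := ⟨by linarith, by linarith⟩
  have hfg := aux_intble hab hf hg hf0 hg0
  have hrefl : IntervalIntegrable (fun x => f (a+b-x) * g (a+b-x)) volume a b := by
    have h := hfg.comp_sub_left (a+b)
    simp only [add_sub_cancel_left, add_sub_cancel_right] at h
    exact h.symm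
  have key : ∀ x ∈ Set.Icc a b, (b-a)^2 * (4 * f ((a+b)/2) * g ((a+b)/2)) ≤
      (b-a)^2 * (f x * g x) + (b-a)^2 * (f (a+b-x) * g (a+b-x)) +
      (f a * g a + f b * g b) * (2*((b-x)*(x-a))) +
      (f a * g b + f b * g a) * ((b-x)^2 + (x-a)^2) := by
    intro x hx
    have hxs : a+b-x ∈ Set.Icc a b := ⟨by linarith [hx.2], by linarith [hx.1]⟩
    have midf : 2 * f ((a+b)/2) ≤ f x + f (a+b-x) := by
      have h := hf.2 hx hxs (by norm_num : (0:ℝ) ≤ 1/2) (by norm_num : (0:ℝ) ≤ 1/2)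
        (by norm_num : (1/2:ℝ) + 1/2 = 1)
      simp only [smul_eq_mul] at h
      rw [show (1/2:ℝ)*x + (1/2)*(a+b-x) = (a+b)/2 by ring] at h
      linarith
    have midg : 2 * g ((a+b)/2) ≤ g x + g (a+b-x) := by
      have h := hg.2 hx hxs (by norm_num : (0:ℝ) ≤ 1/2) (by norm_num : (0:ℝ) ≤ 1/2)
        (by norm_num : (1/2:ℝ) + 1/2 = 1)
      simp only [smul_eq_mul] at h
      rw [show (1/2:ℝ)*x + (1/2)*(a+b-x) = (a+b)/2 by ring] at h
      linarith
    have t1 : (2 * f ((a+b)/2)) * (2 * g ((a+b)/2)) ≤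
        (f x + f (a+b-x)) * (g x + g (a+b-x)) :=
      mul_le_mul midf midg (mul_nonneg (by norm_num) (hg0 _ hm))
        (add_nonneg (hf0 x hx) (hf0 _ hxs))
    have t1' := mul_le_mul_of_nonneg_left t1 (sq_nonneg (b-a))
    have h1 := aux_pt hab hf hx
    have h1' := aux_pt hab hf hxs
    have h2 := aux_pt hab hg hx
    have h2' := aux_pt hab hg hxs
    have t2 : ((b-a)*f x) * ((b-a)*g (a+b-x)) ≤
        ((b-x)*f a + (x-a)*f b) * ((b-(a+b-x))*g a + ((a+b-x)-a)*g b) :=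
      mul_le_mul h1 h2' (mul_nonneg hba.le (hg0 _ hxs))
        (le_trans (mul_nonneg hba.le (hf0 x hx)) h1)
    have t3 : ((b-a)*f (a+b-x)) * ((b-a)*g x) ≤
        ((b-(a+b-x))*f a + ((a+b-x)-a)*f b) * ((b-x)*g a + (x-a)*g b) :=
      mul_le_mul h1' h2 (mul_nonneg hba.le (hg0 x hx))
        (le_trans (mul_nonneg hba.le (hf0 _ hxs)) h1')
    nlinarith [t1', t2, t3]
  have iL : IntervalIntegrable (fun _ : ℝ => (b-a)^2 * (4 * f ((a+b)/2) * g ((a+b)/2)))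
      volume a b := intervalIntegrable_const
  have i1 := hfg.const_mul ((b-a)^2)
  have i2 := hrefl.const_mul ((b-a)^2)
  have i3 : IntervalIntegrable (fun x => (f a * g a + f b * g b) * (2*((b-x)*(x-a)))) volume a b :=
    Continuous.intervalIntegrable (by fun_prop) _ _
  have i4 : IntervalIntegrable (fun x => (f a * g b + f b * g a) * ((b-x)^2 + (x-a)^2))
      volume a b := Continuous.intervalIntegrable (by fun_prop) _ _
  have hmono := intervalIntegral.integral_mono_on hab.le iL (((i1.add i2).add i3).add i4) key
  rw [intervalIntegral.integral_const] at hmono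
  rw [intervalIntegral.integral_add (((i1.add i2)).add i3) i4,
    intervalIntegral.integral_add (i1.add i2) i3,
    intervalIntegral.integral_add i1 i2] at hmono
  rw [intervalIntegral.integral_const_mul, intervalIntegral.integral_const_mul,
    intervalIntegral.integral_const_mul, intervalIntegral.integral_const_mul] at hmono
  have hre : (∫ x in a..b, f (a+b-x) * g (a+b-x)) = ∫ x in a..b, f x * g x := by
    have h := intervalIntegral.integral_comp_sub_left (a := a) (b := b)
      (fun y => f y * g y) (a+b)
    simp only [add_sub_cancel_left, add_sub_cancel_right] at h
    exact h
  rw [hre, aux_i3, intervalIntegral.integral_const_mul,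
    intervalIntegral.integral_add (Continuous.intervalIntegrable (by fun_prop) _ _)
      (Continuous.intervalIntegrable (by fun_prop) _ _), aux_i1, aux_i2, smul_eq_mul] at hmono
  have hfin : (2*(b-a)^2) * ((b-a) * (2 * f ((a+b)/2) * g ((a+b)/2))) ≤
      (2*(b-a)^2) * ((∫ x in a..b, f x * g x) +
        (b-a) * ((1/6)*(f a * g a + f b * g b) + (1/3)*(f a * g b + f b * g a))) := by
    nlinarith [hmono]
  exact le_of_mul_le_mul_left hfin (by positivity)

lemma aux_mid {c d : ℝ} {h : ℝ → ℝ} (hcd : c ≤ d) (hh : ConvexOn ℝ (Set.Icc c d) h) :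
    h ((c+d)/2) ≤ (1/2)*(h c + h d) := by
  have h2 := hh.2 (left_mem_Icc.2 hcd) (right_mem_Icc.2 hcd)
    (by norm_num : (0:ℝ) ≤ 1/2) (by norm_num : (0:ℝ) ≤ 1/2) (by norm_num : (1/2:ℝ)+1/2 = 1)
  simp only [smul_eq_mul] at h2
  rw [show (1/2:ℝ)*c + (1/2)*d = (c+d)/2 by ring] at h2
  linarith

set_option maxHeartbeats 1000000

theorem product_hadamard_coordinates_midpoint
    (a b c d : ℝ) (hab : a < b) (hcd : c < d) (f g : ℝ → ℝ → ℝ)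
    (hf0 : ∀ x ∈ Set.Icc a b, ∀ y ∈ Set.Icc c d, 0 ≤ f x y)
    (hg0 : ∀ x ∈ Set.Icc a b, ∀ y ∈ Set.Icc c d, 0 ≤ g x y)
    (hfx : ∀ y ∈ Set.Icc c d, ConvexOn ℝ (Set.Icc a b) (fun x => f x y))
    (hfy : ∀ x ∈ Set.Icc a b, ConvexOn ℝ (Set.Icc c d) (fun y => f x y))
    (hgx : ∀ y ∈ Set.Icc c d, ConvexOn ℝ (Set.Icc a b) (fun x => g x y))
    (hgy : ∀ x ∈ Set.Icc a b, ConvexOn ℝ (Set.Icc c d) (fun y => g x y))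
    (hint : IntegrableOn (fun p : ℝ × ℝ => f p.1 p.2 * g p.1 p.2)
      (Set.Icc a b ×ˢ Set.Icc c d) volume) :
    4 * f ((a + b) / 2) ((c + d) / 2) * g ((a + b) / 2) ((c + d) / 2) ≤
      (1 / ((b - a) * (d - c))) * (∫ x in a..b, ∫ y in c..d, f x y * g x y) +
      (5 / 36) * (f a c * g a c + f b c * g b c + f a d * g a d + f b d * g b d) +
      (7 / 36) * (f a c * g a d + f a d * g a c + f b c * g b d + f b d * g b c +
        f b c * g a c + f b d * g a d + f a c * g b c + f a d * g b d) +
      (2 / 9) * (f b c * g a d + f b d * g a c + f a c * g b d + f a d * g b c) := by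
  have hp : (0:ℝ) < b - a := by linarith
  have hq : (0:ℝ) < d - c := by linarith
  have ha : a ∈ Set.Icc a b := left_mem_Icc.2 hab.le
  have hb : b ∈ Set.Icc a b := right_mem_Icc.2 hab.le
  have hc : c ∈ Set.Icc c d := left_mem_Icc.2 hcd.le
  have hd : d ∈ Set.Icc c d := right_mem_Icc.2 hcd.le
  have hm2 : (c+d)/2 ∈ Set.Icc c d := ⟨by linarith, by linarith⟩
  set m2 : ℝ := (c+d)/2 with hm2def
  -- Step A : 1-D midpoint inequality in the x-direction at y = m2
  have stepA : (b-a) * (2 * f ((a+b)/2) m2 * g ((a+b)/2) m2) ≤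
      (∫ x in a..b, f x m2 * g x m2) +
      (b-a) * ((1/6)*(f a m2 * g a m2 + f b m2 * g b m2) +
        (1/3)*(f a m2 * g b m2 + f b m2 * g a m2)) :=
    aux_p2 hab (hfx m2 hm2) (hgx m2 hm2)
      (fun x hx => hf0 x hx m2 hm2) (fun x hx => hg0 x hx m2 hm2)
  -- Fubini : integrability of the inner integral
  have hJint : IntervalIntegrable (fun x => ∫ y in c..d, f x y * g x y) volume a b := by
    have hprod : Integrable (fun p : ℝ×ℝ => f p.1 p.2 * g p.1 p.2)
        ((volume.restrict (Set.Icc a b)).prod (volume.restrict (Set.Icc c d))) := by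
      rw [Measure.prod_restrict, ← Measure.volume_eq_prod]; exact hint
    have h1 := hprod.integral_prod_left
    rw [intervalIntegrable_iff_integrableOn_Icc_of_le hab.le]
    have he : (fun x => ∫ y in c..d, f x y * g x y)
        = fun x => ∫ y, f x y * g x y ∂(volume.restrict (Set.Icc c d)) := by
      funext x
      rw [intervalIntegral.integral_of_le hcd.le]
      exact (integral_Icc_eq_integral_Ioc ..).symm
    rw [he]; exact h1
  -- pointwise (in x) 1-D midpoint inequality in the y-direction
  have stepB : ∀ x ∈ Set.Icc a b, 2 * (f x m2 * g x m2) ≤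
      (1/(d-c)) * (∫ y in c..d, f x y * g x y) + (1/6)*(f x c * g x c) +
      (1/6)*(f x d * g x d) + (1/3)*(f x c * g x d) + (1/3)*(f x d * g x c) := by
    intro x hx
    have h : (d-c) * (2 * f x m2 * g x m2) ≤ (∫ y in c..d, f x y * g x y) +
        (d-c) * ((1/6)*(f x c * g x c + f x d * g x d) +
          (1/3)*(f x c * g x d + f x d * g x c)) :=
      aux_p2 hcd (hfy x hx) (hgy x hx) (fun y hy => hf0 x hx y hy) (fun y hy => hg0 x hx y hy)
    refine le_of_mul_le_mul_left ?_ hq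
    calc (d-c) * (2 * (f x m2 * g x m2)) = (d-c) * (2 * f x m2 * g x m2) := by ring
      _ ≤ (∫ y in c..d, f x y * g x y) +
          (d-c) * ((1/6)*(f x c * g x c + f x d * g x d) +
            (1/3)*(f x c * g x d + f x d * g x c)) := h
      _ = (d-c) * ((1/(d-c)) * (∫ y in c..d, f x y * g x y) + (1/6)*(f x c * g x c) +
          (1/6)*(f x d * g x d) + (1/3)*(f x c * g x d) + (1/3)*(f x d * g x c)) := by
          field_simp
          ring
  -- integrabilities of the section products
  have im : IntervalIntegrable (fun x => f x m2 * g x m2) volume a b :=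
    aux_intble hab (hfx m2 hm2) (hgx m2 hm2)
      (fun x hx => hf0 x hx m2 hm2) (fun x hx => hg0 x hx m2 hm2)
  have icc : IntervalIntegrable (fun x => f x c * g x c) volume a b :=
    aux_intble hab (hfx c hc) (hgx c hc)
      (fun x hx => hf0 x hx c hc) (fun x hx => hg0 x hx c hc)
  have idd : IntervalIntegrable (fun x => f x d * g x d) volume a b :=
    aux_intble hab (hfx d hd) (hgx d hd)
      (fun x hx => hf0 x hx d hd) (fun x hx => hg0 x hx d hd)
  have icd : IntervalIntegrable (fun x => f x c * g x d) volume a b :=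
    aux_intble hab (hfx c hc) (hgx d hd)
      (fun x hx => hf0 x hx c hc) (fun x hx => hg0 x hx d hd)
  have idc : IntervalIntegrable (fun x => f x d * g x c) volume a b :=
    aux_intble hab (hfx d hd) (hgx c hc)
      (fun x hx => hf0 x hx d hd) (fun x hx => hg0 x hx c hc)
  have i1' := hJint.const_mul (1/(d-c))
  have i2' := icc.const_mul (1/6 : ℝ)
  have i3' := idd.const_mul (1/6 : ℝ)
  have i4' := icd.const_mul (1/3 : ℝ)
  have i5' := idc.const_mul (1/3 : ℝ)
  have hmono := intervalIntegral.integral_mono_on hab.le (im.const_mul 2)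
    ((((i1'.add i2').add i3').add i4').add i5') stepB
  rw [intervalIntegral.integral_add (((i1'.add i2').add i3').add i4') i5',
      intervalIntegral.integral_add ((i1'.add i2').add i3') i4',
      intervalIntegral.integral_add (i1'.add i2') i3',
      intervalIntegral.integral_add i1' i2',
      intervalIntegral.integral_const_mul, intervalIntegral.integral_const_mul,
      intervalIntegral.integral_const_mul, intervalIntegral.integral_const_mul,
      intervalIntegral.integral_const_mul, intervalIntegral.integral_const_mul] at hmono
  set S : ℝ := ∫ x in a..b, f x m2 * g x m2 with hSdef
  set I2 : ℝ := ∫ x in a..b, ∫ y in c..d, f x y * g x y with hI2def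
  -- 1-D upper Pachpatte bounds in the x-direction
  have hTcc : (∫ x in a..b, f x c * g x c) ≤
      (b-a)*((1/3)*(f a c * g a c + f b c * g b c) + (1/6)*(f a c * g b c + f b c * g a c)) :=
    aux_p1 hab (hfx c hc) (hgx c hc)
      (fun x hx => hf0 x hx c hc) (fun x hx => hg0 x hx c hc)
  have hTdd : (∫ x in a..b, f x d * g x d) ≤
      (b-a)*((1/3)*(f a d * g a d + f b d * g b d) + (1/6)*(f a d * g b d + f b d * g a d)) :=
    aux_p1 hab (hfx d hd) (hgx d hd)
      (fun x hx => hf0 x hx d hd) (fun x hx => hg0 x hx d hd)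
  have hTcd : (∫ x in a..b, f x c * g x d) ≤
      (b-a)*((1/3)*(f a c * g a d + f b c * g b d) + (1/6)*(f a c * g b d + f b c * g a d)) :=
    aux_p1 hab (hfx c hc) (hgx d hd)
      (fun x hx => hf0 x hx c hc) (fun x hx => hg0 x hx d hd)
  have hTdc : (∫ x in a..b, f x d * g x c) ≤
      (b-a)*((1/3)*(f a d * g a c + f b d * g b c) + (1/6)*(f a d * g b c + f b d * g a c)) :=
    aux_p1 hab (hfx d hd) (hgx c hc)
      (fun x hx => hf0 x hx d hd) (fun x hx => hg0 x hx c hc)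
  -- midpoint corner bounds
  have mfa : f a m2 ≤ (1/2)*(f a c + f a d) := aux_mid hcd.le (hfy a ha)
  have mfb : f b m2 ≤ (1/2)*(f b c + f b d) := aux_mid hcd.le (hfy b hb)
  have mga : g a m2 ≤ (1/2)*(g a c + g a d) := aux_mid hcd.le (hgy a ha)
  have mgb : g b m2 ≤ (1/2)*(g b c + g b d) := aux_mid hcd.le (hgy b hb)
  have paa : f a m2 * g a m2 ≤ ((1/2)*(f a c + f a d)) * ((1/2)*(g a c + g a d)) :=
    mul_le_mul mfa mga (hg0 a ha m2 hm2) (le_trans (hf0 a ha m2 hm2) mfa)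
  have pbb : f b m2 * g b m2 ≤ ((1/2)*(f b c + f b d)) * ((1/2)*(g b c + g b d)) :=
    mul_le_mul mfb mgb (hg0 b hb m2 hm2) (le_trans (hf0 b hb m2 hm2) mfb)
  have pab : f a m2 * g b m2 ≤ ((1/2)*(f a c + f a d)) * ((1/2)*(g b c + g b d)) :=
    mul_le_mul mfa mgb (hg0 b hb m2 hm2) (le_trans (hf0 a ha m2 hm2) mfa)
  have pba : f b m2 * g a m2 ≤ ((1/2)*(f b c + f b d)) * ((1/2)*(g a c + g a d)) :=
    mul_le_mul mfb mga (hg0 a ha m2 hm2) (le_trans (hf0 b hb m2 hm2) mfb)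
  have hD : (1/6)*(f a m2 * g a m2 + f b m2 * g b m2) +
      (1/3)*(f a m2 * g b m2 + f b m2 * g a m2) ≤
      (1/6)*(((1/2)*(f a c + f a d)) * ((1/2)*(g a c + g a d)) +
        ((1/2)*(f b c + f b d)) * ((1/2)*(g b c + g b d))) +
      (1/3)*(((1/2)*(f a c + f a d)) * ((1/2)*(g b c + g b d)) +
        ((1/2)*(f b c + f b d)) * ((1/2)*(g a c + g a d))) := by
    linarith [paa, pbb, pab, pba]
  have h2 : (1/6)*(∫ x in a..b, f x c * g x c) + (1/6)*(∫ x in a..b, f x d * g x d) +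
      (1/3)*(∫ x in a..b, f x c * g x d) + (1/3)*(∫ x in a..b, f x d * g x c) ≤
      (b-a) * ((1/6)*((1/3)*(f a c * g a c + f b c * g b c) + (1/6)*(f a c * g b c + f b c * g a c))
        + (1/6)*((1/3)*(f a d * g a d + f b d * g b d) + (1/6)*(f a d * g b d + f b d * g a d))
        + (1/3)*((1/3)*(f a c * g a d + f b c * g b d) + (1/6)*(f a c * g b d + f b c * g a d))
        + (1/3)*((1/3)*(f a d * g a c + f b d * g b c) + (1/6)*(f a d * g b c + f b d * g a c))) := by
    linarith [hTcc, hTdd, hTcd, hTdc]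
  have h1 : (d-c) * (2*S) ≤ I2 + (d-c) * ((1/6)*(∫ x in a..b, f x c * g x c) +
      (1/6)*(∫ x in a..b, f x d * g x d) + (1/3)*(∫ x in a..b, f x c * g x d) +
      (1/3)*(∫ x in a..b, f x d * g x c)) := by
    have hA := mul_le_mul_of_nonneg_left hmono hq.le
    have eI : (d-c) * ((1/(d-c)) * I2) = I2 := by field_simp
    linarith [hA, eI]
  refine le_of_mul_le_mul_left ?_ (show (0:ℝ) < (b-a)*(d-c) by positivity)
  have c1 : ((b-a)*(d-c)) * (4 * f ((a+b)/2) m2 * g ((a+b)/2) m2) ≤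
      2*(d-c)*(S + (b-a)*((1/6)*(f a m2 * g a m2 + f b m2 * g b m2) +
        (1/3)*(f a m2 * g b m2 + f b m2 * g a m2))) := by
    linarith [mul_le_mul_of_nonneg_left stepA (show (0:ℝ) ≤ 2*(d-c) by positivity)]
  have c3 : (d-c)*(2*S) ≤ I2 + (d-c)*((b-a) *
      ((1/6)*((1/3)*(f a c * g a c + f b c * g b c) + (1/6)*(f a c * g b c + f b c * g a c))
        + (1/6)*((1/3)*(f a d * g a d + f b d * g b d) + (1/6)*(f a d * g b d + f b d * g a d))
        + (1/3)*((1/3)*(f a c * g a d + f b c * g b d) + (1/6)*(f a c * g b d + f b c * g a d))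
        + (1/3)*((1/3)*(f a d * g a c + f b d * g b c) + (1/6)*(f a d * g b c + f b d * g a c)))) := by
    linarith [h1, mul_le_mul_of_nonneg_left h2 hq.le]
  have c4 := mul_le_mul_of_nonneg_left hD (show (0:ℝ) ≤ 2*(d-c)*(b-a) by positivity)
  have c5 : I2 + (d-c)*((b-a) *
      ((1/6)*((1/3)*(f a c * g a c + f b c * g b c) + (1/6)*(f a c * g b c + f b c * g a c))
        + (1/6)*((1/3)*(f a d * g a d + f b d * g b d) + (1/6)*(f a d * g b d + f b d * g a d))
        + (1/3)*((1/3)*(f a c * g a d + f b c * g b d) + (1/6)*(f a c * g b d + f b c * g a d))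
        + (1/3)*((1/3)*(f a d * g a c + f b d * g b c) + (1/6)*(f a d * g b c + f b d * g a c))))
      + 2*(d-c)*(b-a) *
      ((1/6)*(((1/2)*(f a c + f a d)) * ((1/2)*(g a c + g a d)) +
        ((1/2)*(f b c + f b d)) * ((1/2)*(g b c + g b d))) +
      (1/3)*(((1/2)*(f a c + f a d)) * ((1/2)*(g b c + g b d)) +
        ((1/2)*(f b c + f b d)) * ((1/2)*(g a c + g a d))))
      = ((b-a)*(d-c)) * ((1 / ((b - a) * (d - c))) * I2 +
      (5 / 36) * (f a c * g a c + f b c * g b c + f a d * g a d + f b d * g b d) +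
      (7 / 36) * (f a c * g a d + f a d * g a c + f b c * g b d + f b d * g b c +
        f b c * g a c + f b d * g a d + f a c * g b c + f a d * g b d) +
      (2 / 9) * (f b c * g a d + f b d * g a c + f a c * g b d + f a d * g b c)) := by
    field_simp
    ring
  linarith [c1, c3, c4, c5]
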